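/- Let (p_m), (q_n) be positive sequences with partial sums P_m, Q_n strictly increasing to infinity, satisfying P_{m−1}/P_m → 1 and Q_{n−1}/Q_n → 1. Let (u_{mn}) be a double sequence of real numbers whose weighted means σ_{mn} are P-convergent to ℓ. If there exists M > 0 such that for all sufficiently large m, n: (P_m/p_m)(u_{mn} − u_{m−1,n}) ≥ −M and (Q_n/q_n)(u_{mn} − u_{m,n−1}) ≥ −M, then (u_{mn}) is P-convergent to ℓ. -/

import Mathlib

open Filter

lemma chainAux (v P : ℕ → ℝ) (M : ℝ) (hM : 0 ≤ M) (hmono : Monotone P)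
    (i : ℕ) (hPi : 0 < P i)
    (hstep : ∀ k, i < k → -(M * ((P k - P (k-1)) / P k)) ≤ v k - v (k-1)) :
    ∀ m, i ≤ m → v i - M * ((P m - P i) / P i) ≤ v m := by
  intro m him
  induction m, him using Nat.le_induction with
  | base => simp
  | succ m him ih =>
    have h1 := hstep (m+1) (by omega)
    simp only [Nat.add_sub_cancel] at h1
    have hPm1 : 0 < P (m+1) := lt_of_lt_of_le hPi (hmono (by omega))
    have hPle : P i ≤ P (m+1) := hmono (by omega)
    have hnum : 0 ≤ P (m+1) - P m := sub_nonneg.2 (hmono (by omega))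
    have hdiv : (P (m+1) - P m) / P (m+1) ≤ (P (m+1) - P m) / P i := by gcongr
    have h2 := mul_le_mul_of_nonneg_left hdiv hM
    have h4 : M * ((P m - P i) / P i) + M * ((P (m+1) - P m) / P i)
        = M * ((P (m+1) - P i) / P i) := by
      rw [← mul_add, ← add_div]; ring_nf
    linarith [ih]

set_option maxHeartbeats 1600000 in
/-- Tauberian theorem with one-sided Landau-type conditions for real double sequences. -/
theorem stmt11 (u : ℕ → ℕ → ℝ) (p q : ℕ → ℝ)
    (hp : ∀ m, 0 < p m) (hq : ∀ n, 0 < q n)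
    (P Q : ℕ → ℝ)
    (hP : ∀ m : ℕ, P m = ∑ i ∈ Finset.range (m + 1), p i)
    (hQ : ∀ n : ℕ, Q n = ∑ j ∈ Finset.range (n + 1), q j)
    (hPtop : Tendsto P atTop atTop) (hQtop : Tendsto Q atTop atTop)
    (hPratio : Tendsto (fun m : ℕ => P (m - 1) / P m) atTop (nhds 1))
    (hQratio : Tendsto (fun n : ℕ => Q (n - 1) / Q n) atTop (nhds 1))
    (σ : ℕ → ℕ → ℝ)
    (hσ : ∀ m n : ℕ, σ m n =
      (∑ i ∈ Finset.range (m + 1), ∑ j ∈ Finset.range (n + 1), p i * q j * u i j)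
        / (P m * Q n))
    (ℓ : ℝ)
    (hsum : ∀ ε > (0 : ℝ), ∃ n₀ : ℕ, ∀ m n : ℕ, n₀ ≤ m → n₀ ≤ n → |σ m n - ℓ| < ε)
    (M : ℝ) (hM : 0 < M)
    (hLandau : ∃ n₁ : ℕ, ∀ m n : ℕ, n₁ ≤ m → n₁ ≤ n →
      P m / p m * (u m n - u (m - 1) n) ≥ -M ∧
      Q n / q n * (u m n - u m (n - 1)) ≥ -M) :
    ∀ ε > (0 : ℝ), ∃ n₀ : ℕ, ∀ m n : ℕ, n₀ ≤ m → n₀ ≤ n → |u m n - ℓ| < ε := by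
  classical
  obtain ⟨K, hK⟩ := hLandau
  -- basic positivity and monotonicity
  have hPpos : ∀ m, 0 < P m := by
    intro m; rw [hP]
    exact Finset.sum_pos (fun i _ => hp i) (by simp)
  have hQpos : ∀ n, 0 < Q n := by
    intro n; rw [hQ]
    exact Finset.sum_pos (fun j _ => hq j) (by simp)
  have hPsucc : ∀ m, P (m+1) = P m + p (m+1) := by
    intro m; rw [hP, hP, Finset.sum_range_succ]
  have hQsucc : ∀ n, Q (n+1) = Q n + q (n+1) := by
    intro n; rw [hQ, hQ, Finset.sum_range_succ]
  have hPstrict : StrictMono P :=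
    strictMono_nat_of_lt_succ (fun m => by rw [hPsucc]; linarith [hp (m+1)])
  have hQstrict : StrictMono Q :=
    strictMono_nat_of_lt_succ (fun n => by rw [hQsucc]; linarith [hq (n+1)])
  have hPmono : Monotone P := hPstrict.monotone
  have hQmono : Monotone Q := hQstrict.monotone
  have hpP : ∀ k : ℕ, 1 ≤ k → p k = P k - P (k-1) := by
    intro k hk
    obtain ⟨j, rfl⟩ : ∃ j, k = j + 1 := ⟨k - 1, by omega⟩
    simp only [Nat.add_sub_cancel]
    linarith [hPsucc j]
  have hqQ : ∀ k : ℕ, 1 ≤ k → q k = Q k - Q (k-1) := by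
    intro k hk
    obtain ⟨j, rfl⟩ : ∃ j, k = j + 1 := ⟨k - 1, by omega⟩
    simp only [Nat.add_sub_cancel]
    linarith [hQsucc j]
  -- chain inequalities from the Landau condition
  have hchainP : ∀ n, K ≤ n → ∀ i, K ≤ i → ∀ m, i ≤ m →
      u i n - M * ((P m - P i) / P i) ≤ u m n := by
    intro n hn i hi
    refine chainAux (fun k => u k n) P M hM.le hPmono i (hPpos i) ?_
    intro k hk
    have hk1 : 1 ≤ k := by omega
    have hL := (hK k n (by omega) hn).1
    have hpk := hp k
    have hPk := hPpos k
    have h2 : -M * (p k / P k) ≤ (P k / p k * (u k n - u (k-1) n)) * (p k / P k) :=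
      mul_le_mul_of_nonneg_right hL (by positivity)
    have h3 : (P k / p k * (u k n - u (k-1) n)) * (p k / P k) = u k n - u (k-1) n := by
      field_simp
    rw [h3] at h2
    rw [← hpP k hk1]
    simpa [neg_mul] using h2
  have hchainQ : ∀ i, K ≤ i → ∀ j, K ≤ j → ∀ n, j ≤ n →
      u i j - M * ((Q n - Q j) / Q j) ≤ u i n := by
    intro i hi j hj
    refine chainAux (fun k => u i k) Q M hM.le hQmono j (hQpos j) ?_
    intro k hk
    have hk1 : 1 ≤ k := by omega
    have hL := (hK i k hi (by omega)).2
    have hqk := hq k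
    have hQk := hQpos k
    have h2 : -M * (q k / Q k) ≤ (Q k / q k * (u i k - u i (k-1))) * (q k / Q k) :=
      mul_le_mul_of_nonneg_right hL (by positivity)
    have h3 : (Q k / q k * (u i k - u i (k-1))) * (q k / Q k) = u i k - u i (k-1) := by
      field_simp
    rw [h3] at h2
    rw [← hqQ k hk1]
    simpa [neg_mul] using h2
  have hfor : ∀ m n i j, K ≤ m → K ≤ n → m ≤ i → n ≤ j →
      u m n - M * ((P i - P m) / P m) - M * ((Q j - Q n) / Q n) ≤ u i j := by
    intro m n i j hm hn hmi hnj
    have h1 := hchainP n hn m hm i hmi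
    have h2 := hchainQ i (le_trans hm hmi) n hn j hnj
    linarith
  -- the weighted partial sums
  set F : ℕ → ℕ → ℝ :=
    fun a b => ∑ i ∈ Finset.range a, ∑ j ∈ Finset.range b, p i * q j * u i j with hFdef
  have hFσ : ∀ a b, F (a+1) (b+1) = σ a b * (P a * Q b) := by
    intro a b
    have hne : P a * Q b ≠ 0 := ne_of_gt (mul_pos (hPpos a) (hQpos b))
    rw [hσ, div_mul_cancel₀ _ hne]
  -- key rectangle estimate
  have key : ∀ m a n b : ℕ, K ≤ m → K ≤ n → m < a → n < b →
      (u m n - (M * ((P a - P m) / P m) + M * ((Q b - Q n) / Q n)))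
          * ((P a - P m) * (Q b - Q n))
        ≤ F (a+1) (b+1) - F (m+1) (b+1) - F (a+1) (n+1) + F (m+1) (n+1)
      ∧ F (a+1) (b+1) - F (m+1) (b+1) - F (a+1) (n+1) + F (m+1) (n+1)
        ≤ (u a b + (M * ((P a - P m) / P m) + M * ((Q b - Q n) / Q n)))
          * ((P a - P m) * (Q b - Q n)) := by
    intro m a n b hm hn hma hnb
    set c : ℝ := M * ((P a - P m) / P m) + M * ((Q b - Q n) / Q n) with hcdef
    have hSsplit : (∑ i ∈ Finset.Ico (m+1) (a+1), ∑ j ∈ Finset.Ico (n+1) (b+1),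
        p i * q j * u i j)
        = F (a+1) (b+1) - F (m+1) (b+1) - F (a+1) (n+1) + F (m+1) (n+1) := by
      have inner : ∀ i, (∑ j ∈ Finset.Ico (n+1) (b+1), p i * q j * u i j)
          = (∑ j ∈ Finset.range (b+1), p i * q j * u i j)
            - ∑ j ∈ Finset.range (n+1), p i * q j * u i j :=
        fun i => Finset.sum_Ico_eq_sub _ (by omega)
      simp_rw [inner, Finset.sum_sub_distrib]
      rw [Finset.sum_Ico_eq_sub _ (show m+1 ≤ a+1 by omega),
        Finset.sum_Ico_eq_sub _ (show m+1 ≤ a+1 by omega)]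
      simp only [hFdef]
      ring
    have hsump : (∑ i ∈ Finset.Ico (m+1) (a+1), p i) = P a - P m := by
      rw [Finset.sum_Ico_eq_sub _ (show m+1 ≤ a+1 by omega), ← hP, ← hP]
    have hsumq : (∑ j ∈ Finset.Ico (n+1) (b+1), q j) = Q b - Q n := by
      rw [Finset.sum_Ico_eq_sub _ (show n+1 ≤ b+1 by omega), ← hQ, ← hQ]
    have hconst : ∀ X : ℝ, (∑ i ∈ Finset.Ico (m+1) (a+1),
        ∑ j ∈ Finset.Ico (n+1) (b+1), p i * q j * X)
        = X * ((P a - P m) * (Q b - Q n)) := by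
      intro X
      have h1 : ∀ i, (∑ j ∈ Finset.Ico (n+1) (b+1), p i * q j * X)
          = p i * ((Q b - Q n) * X) := by
        intro i
        rw [← hsumq, Finset.sum_mul, Finset.mul_sum]
        exact Finset.sum_congr rfl (fun j _ => by ring)
      simp_rw [h1]
      rw [← Finset.sum_mul, hsump]
      ring
    constructor
    · rw [← hSsplit, ← hconst (u m n - c)]
      refine Finset.sum_le_sum (fun i hi => Finset.sum_le_sum (fun j hj => ?_))
      rw [Finset.mem_Ico] at hi hj
      have hu := hfor m n i j hm hn (by omega) (by omega)
      have hb1 : M * ((P i - P m) / P m) ≤ M * ((P a - P m) / P m) := by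
        have h : P i ≤ P a := hPmono (by omega)
        exact mul_le_mul_of_nonneg_left
          ((div_le_div_iff_of_pos_right (hPpos m)).mpr (by linarith)) hM.le
      have hb2 : M * ((Q j - Q n) / Q n) ≤ M * ((Q b - Q n) / Q n) := by
        have h : Q j ≤ Q b := hQmono (by omega)
        exact mul_le_mul_of_nonneg_left
          ((div_le_div_iff_of_pos_right (hQpos n)).mpr (by linarith)) hM.le
      have huij : u m n - c ≤ u i j := by rw [hcdef]; linarith
      have hpq : (0:ℝ) ≤ p i * q j := le_of_lt (mul_pos (hp i) (hq j))
      exact mul_le_mul_of_nonneg_left huij hpq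
    · rw [← hSsplit, ← hconst (u a b + c)]
      refine Finset.sum_le_sum (fun i hi => Finset.sum_le_sum (fun j hj => ?_))
      rw [Finset.mem_Ico] at hi hj
      have hu := hfor i j a b (by omega) (by omega) (by omega) (by omega)
      have hb1 : M * ((P a - P i) / P i) ≤ M * ((P a - P m) / P m) := by
        refine mul_le_mul_of_nonneg_left ?_ hM.le
        refine div_le_div₀ (by linarith [hPmono (show m ≤ a by omega)]) ?_ (hPpos m) ?_
        · linarith [hPmono (show m ≤ i by omega)]
        · exact hPmono (by omega)
      have hb2 : M * ((Q b - Q j) / Q j) ≤ M * ((Q b - Q n) / Q n) := by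
        refine mul_le_mul_of_nonneg_left ?_ hM.le
        refine div_le_div₀ (by linarith [hQmono (show n ≤ b by omega)]) ?_ (hQpos n) ?_
        · linarith [hQmono (show n ≤ j by omega)]
        · exact hQmono (by omega)
      have huij : u i j ≤ u a b + c := by rw [hcdef]; linarith
      have hpq : (0:ℝ) ≤ p i * q j := le_of_lt (mul_pos (hp i) (hq j))
      exact mul_le_mul_of_nonneg_left huij hpq
  -- now the ε-argument
  intro ε hε
  set θ : ℝ := min (1/2 : ℝ) (ε / (32 * M)) with hθdef
  have hθpos : 0 < θ := lt_min (by norm_num) (div_pos hε (by linarith))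
  have hθhalf : θ ≤ 1/2 := min_le_left _ _
  have hθM : 8 * M * θ ≤ ε / 4 := by
    have h1 : θ ≤ ε / (32 * M) := min_le_right _ _
    have h2 := mul_le_mul_of_nonneg_left h1 (show (0:ℝ) ≤ 8 * M by positivity)
    have h3 : 8 * M * (ε / (32 * M)) = ε / 4 := by
      field_simp
      ring
    linarith
  set ε' : ℝ := ε * θ^2 / 144 with hε'def
  have hε'pos : 0 < ε' := by positivity
  obtain ⟨n₀σ, hσb⟩ := hsum ε' hε'pos
  -- ratio thresholds
  have hratP : ∃ N₁ : ℕ, ∀ k ≥ N₁, (1 - θ) * P k ≤ P (k-1) := by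
    have hev : ∀ᶠ k in atTop, (1:ℝ) - θ < P (k-1) / P k :=
      hPratio.eventually (eventually_gt_nhds (by linarith))
    obtain ⟨N₁, hN₁⟩ := eventually_atTop.mp hev
    refine ⟨N₁, fun k hk => ?_⟩
    have h := hN₁ k hk
    have hPk := hPpos k
    have := (lt_div_iff₀ hPk).mp h
    linarith
  obtain ⟨N₁, hN₁⟩ := hratP
  have hratQ : ∃ N₂ : ℕ, ∀ k ≥ N₂, (1 - θ) * Q k ≤ Q (k-1) := by
    have hev : ∀ᶠ k in atTop, (1:ℝ) - θ < Q (k-1) / Q k :=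
      hQratio.eventually (eventually_gt_nhds (by linarith))
    obtain ⟨N₂, hN₂⟩ := eventually_atTop.mp hev
    refine ⟨N₂, fun k hk => ?_⟩
    have h := hN₂ k hk
    have hQk := hQpos k
    have := (lt_div_iff₀ hQk).mp h
    linarith
  obtain ⟨N₂, hN₂⟩ := hratQ
  set C : ℕ := max (max K n₀σ) (max N₁ N₂) with hCdef
  obtain ⟨TP, hTP⟩ := eventually_atTop.mp (hPtop.eventually_gt_atTop ((1+θ) * P C))
  obtain ⟨TQ, hTQ⟩ := eventually_atTop.mp (hQtop.eventually_gt_atTop ((1+θ) * Q C))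
  refine ⟨max (max (max K n₀σ) (max N₁ N₂)) (max TP TQ), ?_⟩
  intro m n hm hn
  have hmK : K ≤ m := by omega
  have hnK : K ≤ n := by omega
  have hmσ : n₀σ ≤ m := by omega
  have hnσ : n₀σ ≤ n := by omega
  have hmN₁ : N₁ ≤ m := by omega
  have hnN₂ : N₂ ≤ n := by omega
  have hmTP : TP ≤ m := by omega
  have hnTQ : TQ ≤ n := by omega
  -- the σ-error bound for a rectangle
  have hSbound : ∀ m' a n' b : ℕ, n₀σ ≤ m' → n₀σ ≤ n' → m' ≤ a → n' ≤ b →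
      |F (a+1) (b+1) - F (m'+1) (b+1) - F (a+1) (n'+1) + F (m'+1) (n'+1)
        - ℓ * ((P a - P m') * (Q b - Q n'))| ≤ ε' * (4 * (P a * Q b)) := by
    intro m' a n' b hm' hn' hma hnb
    rw [hFσ, hFσ, hFσ, hFσ]
    have e1 := hσb a b (by omega) (by omega)
    have e2 := hσb m' b (by omega) (by omega)
    have e3 := hσb a n' (by omega) (by omega)
    have e4 := hσb m' n' (by omega) (by omega)
    have hPa := hPpos a; have hPm' := hPpos m'
    have hQb := hQpos b; have hQn' := hQpos n'
    have hPle : P m' ≤ P a := hPmono hma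
    have hQle : Q n' ≤ Q b := hQmono hnb
    have habs : ∀ (s : ℝ) (x y : ℝ), |s - ℓ| < ε' → 0 < x → 0 < y →
        x ≤ P a → y ≤ Q b → |s * (x*y) - ℓ * (x*y)| ≤ ε' * (P a * Q b) := by
      intro s x y hs hx hy hxa hyb
      rw [← sub_mul, abs_mul, abs_of_pos (mul_pos hx hy)]
      have h1 : |s - ℓ| * (x*y) ≤ ε' * (x*y) :=
        mul_le_mul_of_nonneg_right hs.le (mul_pos hx hy).le
      have h2 : ε' * (x*y) ≤ ε' * (P a * Q b) := by
        apply mul_le_mul_of_nonneg_left _ hε'pos.le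
        exact mul_le_mul hxa hyb hy.le hPa.le
      linarith
    have b1 := habs _ _ _ e1 hPa hQb le_rfl le_rfl
    have b2 := habs _ _ _ e2 hPm' hQb hPle le_rfl
    have b3 := habs _ _ _ e3 hPa hQn' le_rfl hQle
    have b4 := habs _ _ _ e4 hPm' hQn' hPle hQle
    have hid : σ a b * (P a * Q b) - σ m' b * (P m' * Q b) - σ a n' * (P a * Q n')
        + σ m' n' * (P m' * Q n') - ℓ * ((P a - P m') * (Q b - Q n'))
        = (σ a b * (P a * Q b) - ℓ * (P a * Q b))
          - (σ m' b * (P m' * Q b) - ℓ * (P m' * Q b))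
          - (σ a n' * (P a * Q n') - ℓ * (P a * Q n'))
          + (σ m' n' * (P m' * Q n') - ℓ * (P m' * Q n')) := by ring
    rw [hid]
    have t1 := abs_le.mp b1
    have t2 := abs_le.mp b2
    have t3 := abs_le.mp b3
    have t4 := abs_le.mp b4
    rw [abs_le]
    constructor <;> linarith [t1.1, t1.2, t2.1, t2.2, t3.1, t3.2, t4.1, t4.2]
  ---- UPPER BOUND ----
  have hupper : u m n - ℓ ≤ ε / 2 := by
    have hexm : ∃ k, (1+θ) * P m ≤ P k := (hPtop.eventually_ge_atTop _).exists
    have hexn : ∃ k, (1+θ) * Q n ≤ Q k := (hQtop.eventually_ge_atTop _).exists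
    set a := Nat.find hexm with hadef
    set b := Nat.find hexn with hbdef
    have ha : (1+θ) * P m ≤ P a := Nat.find_spec hexm
    have hb : (1+θ) * Q n ≤ Q b := Nat.find_spec hexn
    have hPm := hPpos m; have hQn := hQpos n
    have hma : m < a := by
      by_contra h
      push_neg at h
      have h2 := hPmono h
      have h3 := mul_pos hθpos hPm
      nlinarith
    have hnb : n < b := by
      by_contra h
      push_neg at h
      have h2 := hQmono h
      have h3 := mul_pos hθpos hQn
      nlinarith
    have haup : (1 - θ) * P a ≤ (1+θ) * P m := by
      have hmin : ¬ ((1+θ) * P m ≤ P (a-1)) := Nat.find_min hexm (by omega)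
      push_neg at hmin
      have hrat := hN₁ a (by omega)
      linarith
    have hbup : (1 - θ) * Q b ≤ (1+θ) * Q n := by
      have hmin : ¬ ((1+θ) * Q n ≤ Q (b-1)) := Nat.find_min hexn (by omega)
      push_neg at hmin
      have hrat := hN₂ b (by omega)
      linarith
    -- numeric facts
    have hPa := hPpos a; have hQb := hQpos b
    have tθPa : θ * P a ≤ (1/2) * P a := mul_le_mul_of_nonneg_right hθhalf hPa.le
    have tθPm : θ * P m ≤ (1/2) * P m := mul_le_mul_of_nonneg_right hθhalf hPm.le
    have tθQb : θ * Q b ≤ (1/2) * Q b := mul_le_mul_of_nonneg_right hθhalf hQb.le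
    have tθQn : θ * Q n ≤ (1/2) * Q n := mul_le_mul_of_nonneg_right hθhalf hQn.le
    have hP3 : P a ≤ 3 * P m := by linarith only [haup, tθPa, tθPm]
    have hQ3 : Q b ≤ 3 * Q n := by linarith only [hbup, tθQb, tθQn]
    have tfinP : θ * P a ≤ θ * (3 * P m) := mul_le_mul_of_nonneg_left hP3 hθpos.le
    have tfinQ : θ * Q b ≤ θ * (3 * Q n) := mul_le_mul_of_nonneg_left hQ3 hθpos.le
    have hcb1 : M * ((P a - P m) / P m) ≤ 4 * M * θ := by
      have h := (div_le_iff₀ hPm).mpr (show P a - P m ≤ 4*θ*P m by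
        linarith only [haup, tfinP])
      calc M * ((P a - P m) / P m) ≤ M * (4*θ) := mul_le_mul_of_nonneg_left h hM.le
        _ = 4 * M * θ := by ring
    have hcb2 : M * ((Q b - Q n) / Q n) ≤ 4 * M * θ := by
      have h := (div_le_iff₀ hQn).mpr (show Q b - Q n ≤ 4*θ*Q n by
        linarith only [hbup, tfinQ])
      calc M * ((Q b - Q n) / Q n) ≤ M * (4*θ) := mul_le_mul_of_nonneg_left h hM.le
        _ = 4 * M * θ := by ring
    have hd1 : θ * P m ≤ P a - P m := by linarith only [ha]
    have hd2 : θ * Q n ≤ Q b - Q n := by linarith only [hb]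
    have hDlow : θ^2 * (P m * Q n) ≤ (P a - P m) * (Q b - Q n) := by
      have hprod := mul_le_mul hd1 hd2
        (mul_nonneg hθpos.le hQn.le)
        (by linarith only [hd1, mul_pos hθpos hPm])
      calc θ^2 * (P m * Q n) = θ * P m * (θ * Q n) := by ring
        _ ≤ (P a - P m) * (Q b - Q n) := hprod
    have hDpos : 0 < (P a - P m) * (Q b - Q n) :=
      mul_pos (by linarith [hPstrict hma]) (by linarith [hQstrict hnb])
    have hk := key m a n b hmK hnK hma hnb
    have hs := hSbound m a n b hmσ hnσ (by omega) (by omega)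
    have hs' := (abs_le.mp hs).2
    have hfin : ε' * (4 * (P a * Q b)) ≤ (ε/4) * ((P a - P m) * (Q b - Q n)) := by
      have h9 : P a * Q b ≤ 9 * (P m * Q n) := by
        have h := mul_le_mul hP3 hQ3 hQb.le (by linarith only [hPm] : (0:ℝ) ≤ 3 * P m)
        calc P a * Q b ≤ 3 * P m * (3 * Q n) := h
          _ = 9 * (P m * Q n) := by ring
      calc ε' * (4 * (P a * Q b)) = 4 * (ε' * (P a * Q b)) := by ring
        _ ≤ 4 * (ε' * (9 * (P m * Q n))) := by
            have h := mul_le_mul_of_nonneg_left h9 hε'pos.le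
            linarith only [h]
        _ = (ε/4) * (θ^2 * (P m * Q n)) := by rw [hε'def]; ring
        _ ≤ (ε/4) * ((P a - P m) * (Q b - Q n)) :=
            mul_le_mul_of_nonneg_left hDlow (by linarith only [hε] : (0:ℝ) ≤ ε/4)
    have hmul : (u m n - ℓ - (M * ((P a - P m) / P m) + M * ((Q b - Q n) / Q n)))
        * ((P a - P m) * (Q b - Q n)) ≤ (ε/4) * ((P a - P m) * (Q b - Q n)) := by
      have hring : (u m n - ℓ - (M * ((P a - P m) / P m) + M * ((Q b - Q n) / Q n)))
          * ((P a - P m) * (Q b - Q n))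
          = (u m n - (M * ((P a - P m) / P m) + M * ((Q b - Q n) / Q n)))
            * ((P a - P m) * (Q b - Q n)) - ℓ * ((P a - P m) * (Q b - Q n)) := by ring
      linarith only [hk.1, hs', hfin, hring]
    have hfinal := le_of_mul_le_mul_right hmul hDpos
    linarith only [hfinal, hcb1, hcb2, hθM]
  ---- LOWER BOUND ----
  have hlower : ℓ - u m n ≤ ε / 2 := by
    have hPm := hPpos m; have hQn := hQpos n
    have hexm : ∃ k, P m ≤ (1+θ) * P k := ⟨m, by nlinarith⟩
    have hexn : ∃ k, Q n ≤ (1+θ) * Q k := ⟨n, by nlinarith⟩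
    set a' := Nat.find hexm with ha'def
    set b' := Nat.find hexn with hb'def
    have ha' : P m ≤ (1+θ) * P a' := Nat.find_spec hexm
    have hb' : Q n ≤ (1+θ) * Q b' := Nat.find_spec hexn
    have hPC : (1+θ) * P C < P m := hTP m hmTP
    have hQC : (1+θ) * Q C < Q n := hTQ n hnTQ
    have ha'C : C < a' := by
      by_contra h
      push_neg at h
      have h2 := hPmono h
      have h3 := mul_le_mul_of_nonneg_left h2 (by linarith only [hθpos] : (0:ℝ) ≤ 1+θ)
      linarith only [ha', h3, hPC]
    have hb'C : C < b' := by
      by_contra h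
      push_neg at h
      have h2 := hQmono h
      have h3 := mul_le_mul_of_nonneg_left h2 (by linarith only [hθpos] : (0:ℝ) ≤ 1+θ)
      linarith only [hb', h3, hQC]
    set a := a' - 1 with hadef
    set b := b' - 1 with hbdef
    have hamin : (1+θ) * P a < P m := by
      have h : ¬ (P m ≤ (1+θ) * P a) := by
        rw [hadef]
        exact Nat.find_min hexm (by omega)
      push_neg at h; exact h
    have hbmin : (1+θ) * Q b < Q n := by
      have h : ¬ (Q n ≤ (1+θ) * Q b) := by
        rw [hbdef]
        exact Nat.find_min hexn (by omega)
      push_neg at h; exact h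
    have hCa : C ≤ a := by omega
    have hCb : C ≤ b := by omega
    have hPa := hPpos a; have hQb := hQpos b
    have ham : a < m := by
      by_contra h
      push_neg at h
      have h2 := hPmono h
      have h3 := mul_pos hθpos hPa
      linarith only [hamin, h2, h3]
    have hbn : b < n := by
      by_contra h
      push_neg at h
      have h2 := hQmono h
      have h3 := mul_pos hθpos hQb
      linarith only [hbmin, h2, h3]
    -- ratio control at a' = a+1
    have hrata : (1-θ) * P a' ≤ P a := by
      have h := hN₁ a' (by omega)
      rw [← hadef] at h
      exact h
    have hratb : (1-θ) * Q b' ≤ Q b := by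
      have h := hN₂ b' (by omega)
      rw [← hbdef] at h
      exact h
    have halow : (1-θ) * P m ≤ (1+θ) * P a := by
      have t1 := mul_le_mul_of_nonneg_left ha' (by linarith only [hθhalf, hθpos] : (0:ℝ) ≤ 1-θ)
      have t2 := mul_le_mul_of_nonneg_left hrata (by linarith only [hθpos] : (0:ℝ) ≤ 1+θ)
      nlinarith [t1, t2]
    have hblow : (1-θ) * Q n ≤ (1+θ) * Q b := by
      have t1 := mul_le_mul_of_nonneg_left hb' (by linarith only [hθhalf, hθpos] : (0:ℝ) ≤ 1-θ)
      have t2 := mul_le_mul_of_nonneg_left hratb (by linarith only [hθpos] : (0:ℝ) ≤ 1+θ)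
      nlinarith [t1, t2]
    -- numeric facts
    have tθPa : θ * P a ≤ (1/2) * P a := mul_le_mul_of_nonneg_right hθhalf hPa.le
    have tθPm : θ * P m ≤ (1/2) * P m := mul_le_mul_of_nonneg_right hθhalf hPm.le
    have tθQb : θ * Q b ≤ (1/2) * Q b := mul_le_mul_of_nonneg_right hθhalf hQb.le
    have tθQn : θ * Q n ≤ (1/2) * Q n := mul_le_mul_of_nonneg_right hθhalf hQn.le
    have hPm3 : P m ≤ 3 * P a := by linarith only [halow, tθPa, tθPm]
    have hQn3 : Q n ≤ 3 * Q b := by linarith only [hblow, tθQb, tθQn]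
    have tfinP : θ * P m ≤ θ * (3 * P a) := mul_le_mul_of_nonneg_left hPm3 hθpos.le
    have tfinQ : θ * Q n ≤ θ * (3 * Q b) := mul_le_mul_of_nonneg_left hQn3 hθpos.le
    have hcb1 : M * ((P m - P a) / P a) ≤ 4 * M * θ := by
      have h := (div_le_iff₀ hPa).mpr (show P m - P a ≤ 4*θ*P a by
        linarith only [halow, tfinP])
      calc M * ((P m - P a) / P a) ≤ M * (4*θ) := mul_le_mul_of_nonneg_left h hM.le
        _ = 4 * M * θ := by ring
    have hcb2 : M * ((Q n - Q b) / Q b) ≤ 4 * M * θ := by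
      have h := (div_le_iff₀ hQb).mpr (show Q n - Q b ≤ 4*θ*Q b by
        linarith only [hblow, tfinQ])
      calc M * ((Q n - Q b) / Q b) ≤ M * (4*θ) := mul_le_mul_of_nonneg_left h hM.le
        _ = 4 * M * θ := by ring
    have hd1 : θ/2 * P m ≤ P m - P a := by
      have t := mul_le_mul_of_nonneg_left hamin.le
        (by linarith only [hθhalf, hθpos] : (0:ℝ) ≤ 2-θ)
      have s0 : 0 ≤ (θ*(1-θ))*P a :=
        mul_nonneg (mul_nonneg hθpos.le (by linarith only [hθhalf, hθpos])) hPa.le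
      nlinarith [t, s0]
    have hd2 : θ/2 * Q n ≤ Q n - Q b := by
      have t := mul_le_mul_of_nonneg_left hbmin.le
        (by linarith only [hθhalf, hθpos] : (0:ℝ) ≤ 2-θ)
      have s0 : 0 ≤ (θ*(1-θ))*Q b :=
        mul_nonneg (mul_nonneg hθpos.le (by linarith only [hθhalf, hθpos])) hQb.le
      nlinarith [t, s0]
    have hDlow : θ^2/4 * (P m * Q n) ≤ (P m - P a) * (Q n - Q b) := by
      have hprod := mul_le_mul hd1 hd2
        (by nlinarith [mul_pos hθpos hQn] : (0:ℝ) ≤ θ/2 * Q n)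
        (by nlinarith [hd1, mul_pos hθpos hPm])
      calc θ^2/4 * (P m * Q n) = θ/2 * P m * (θ/2 * Q n) := by ring
        _ ≤ (P m - P a) * (Q n - Q b) := hprod
    have hDpos : 0 < (P m - P a) * (Q n - Q b) :=
      mul_pos (by linarith [hPstrict ham]) (by linarith [hQstrict hbn])
    have hk := key a m b n (by omega) (by omega) ham hbn
    have hs := hSbound a m b n (by omega) (by omega) (by omega) (by omega)
    have hs' := (abs_le.mp hs).1
    have hfin : ε' * (4 * (P m * Q n)) ≤ (ε/4) * ((P m - P a) * (Q n - Q b)) := by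
      calc ε' * (4 * (P m * Q n)) = (ε/4) * (θ^2/9 * (P m * Q n)) := by
            rw [hε'def]; ring
        _ ≤ (ε/4) * (θ^2/4 * (P m * Q n)) := by
            have hmn : (0:ℝ) ≤ P m * Q n := (mul_pos hPm hQn).le
            have hsq : (0:ℝ) ≤ θ^2 := sq_nonneg θ
            have : θ^2/9 * (P m * Q n) ≤ θ^2/4 * (P m * Q n) := by nlinarith
            nlinarith [this]
        _ ≤ (ε/4) * ((P m - P a) * (Q n - Q b)) :=
            mul_le_mul_of_nonneg_left hDlow (by linarith only [hε] : (0:ℝ) ≤ ε/4)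
    have hmul : (ℓ - u m n - (M * ((P m - P a) / P a) + M * ((Q n - Q b) / Q b)))
        * ((P m - P a) * (Q n - Q b)) ≤ (ε/4) * ((P m - P a) * (Q n - Q b)) := by
      have hring : (ℓ - u m n - (M * ((P m - P a) / P a) + M * ((Q n - Q b) / Q b)))
          * ((P m - P a) * (Q n - Q b))
          = ℓ * ((P m - P a) * (Q n - Q b))
            - (u m n + (M * ((P m - P a) / P a) + M * ((Q n - Q b) / Q b)))
              * ((P m - P a) * (Q n - Q b)) := by ring
      linarith only [hk.2, hs', hfin, hring]
    have hfinal := le_of_mul_le_mul_right hmul hDpos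
    linarith only [hfinal, hcb1, hcb2, hθM]
  have : |u m n - ℓ| ≤ ε / 2 := abs_le.mpr ⟨by linarith, by linarith⟩
  linarith
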